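/- Let Δ ≥ 3π, let ñ ∈ ℕ with h := Δ/(ñ+1) ≤ 0.01, and let k ∈ (0,1) satisfy 2kK(k) = Δ. Let T denote the ñ×ñ symmetric tridiagonal matrix with 2 on the main diagonal and −1 on the sub- and super-diagonals, let D := diag(cos(π + 2·am(k⁻¹·r·h, k)))_{r=1,…,ñ}, and let J₀ be the 2ñ×2ñ block-diagonal matrix diag(T + h²D, T). Then every eigenvalue of J₀ is at least (3π/(4Δ))²·h²; in particular J₀ is positive definite. -/

import Mathlib

open Real MeasureTheory intervalIntegral

/-- Complete elliptic integral of the first kind, K(m) = ∫₀^{π/2} (1 − m² sin²x)^{−1/2} dx. -/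
noncomputable def ellK (m : ℝ) : ℝ :=
  ∫ x in (0:ℝ)..(π / 2), 1 / Real.sqrt (1 - m ^ 2 * Real.sin x ^ 2)

/-- `am` is the Jacobi amplitude function: for every modulus k ∈ (0,1) and every u ∈ ℝ,
∫₀^{am(u,k)} (1 − k² sin²x)^{−1/2} dx = u. -/
def IsJacobiAm (am : ℝ → ℝ → ℝ) : Prop :=
  ∀ k ∈ Set.Ioo (0:ℝ) 1, ∀ u : ℝ,
    (∫ x in (0:ℝ)..(am u k), 1 / Real.sqrt (1 - k ^ 2 * Real.sin x ^ 2)) = u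

/-- The nt×nt symmetric tridiagonal matrix with 2 on the main diagonal and −1 on the
sub- and super-diagonals. -/
def tridT (n : ℕ) : Matrix (Fin n) (Fin n) ℝ :=
  Matrix.of fun i j =>
    if i = j then 2 else if (i : ℕ) + 1 = (j : ℕ) ∨ (j : ℕ) + 1 = (i : ℕ) then -1 else 0

open Real MeasureTheory intervalIntegral



set_option maxHeartbeats 2000000 in
lemma am_cos_bound (am : ℝ → ℝ → ℝ) (ham : IsJacobiAm am) (k : ℝ) (hk : k ∈ Set.Ioo (0:ℝ) 1)
    (Δ : ℝ) (hΔ : 3 * π ≤ Δ) (hkΔ : 2 * k * ellK k = Δ) (t : ℝ)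
    (h1 : 6 / 5 ≤ t) (h2 : t ≤ Δ - 6 / 5) :
    1 / 8 ≤ Real.cos (π + 2 * am (k⁻¹ * t) k) := by
  obtain ⟨hk0, hk1⟩ := hk
  have hπ := Real.pi_pos
  have hΔ0 : 0 < Δ := by nlinarith
  set f : ℝ → ℝ := fun x => 1 / Real.sqrt (1 - k ^ 2 * Real.sin x ^ 2) with hfdef
  have harg : ∀ x : ℝ, 0 < 1 - k ^ 2 * Real.sin x ^ 2 := by
    intro x
    nlinarith [Real.sin_sq_le_one x, sq_nonneg k, sq_nonneg (Real.sin x)]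
  have hfc : Continuous f := by
    apply continuous_const.div
    · exact Real.continuous_sqrt.comp (by continuity)
    · exact fun x => (Real.sqrt_pos.2 (harg x)).ne'
  have hfpos : ∀ x : ℝ, 0 < f x := by
    intro x
    rw [hfdef]
    exact one_div_pos.2 (Real.sqrt_pos.2 (harg x))
  have hfint : ∀ a b : ℝ, IntervalIntegrable f volume a b := fun a b => hfc.intervalIntegrable a b
  set F : ℝ → ℝ := fun φ => ∫ x in (0:ℝ)..φ, f x with hFdef
  have hFmono : StrictMono F := by
    intro a b hab
    have hadd : F a + ∫ x in a..b, f x = F b :=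
      intervalIntegral.integral_add_adjacent_intervals (hfint 0 a) (hfint a b)
    have hpos : 0 < ∫ x in a..b, f x :=
      intervalIntegral.intervalIntegral_pos_of_pos_on (hfint a b) (fun x _ => hfpos x) hab
    linarith
  have hFam : ∀ u : ℝ, F (am u k) = u := fun u => ham k ⟨hk0, hk1⟩ u
  have hamMono : StrictMono (fun u => am u k) := by
    intro u v huv
    by_contra hc
    push_neg at hc
    have := hFmono.monotone hc
    rw [hFam, hFam] at this
    linarith
  set K : ℝ := ellK k with hKdef
  have hFK : F (π / 2) = K := rfl
  have hamK : am K k = π / 2 := by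
    apply hFmono.injective
    rw [hFam, hFK]
  have ham0 : am 0 k = 0 := by
    apply hFmono.injective
    rw [hFam]
    simp [hFdef]
  -- reflection  F (π - φ) = 2K - F φ
  have hrefl_int : ∀ a b : ℝ, (∫ x in a..b, f x) = ∫ x in (π - b)..(π - a), f x := by
    intro a b
    have := intervalIntegral.integral_comp_sub_left f π (a := a) (b := b)
    rw [← this]
    apply intervalIntegral.integral_congr
    intro x _
    rw [hfdef]
    simp [Real.sin_pi_sub]
  have hFpi : F π = 2 * K := by
    have h01 : (∫ x in (0:ℝ)..(π/2), f x) + (∫ x in (π/2:ℝ)..π, f x) = F π :=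
      intervalIntegral.integral_add_adjacent_intervals (hfint 0 (π/2)) (hfint (π/2) π)
    have h02 : (∫ x in (0:ℝ)..(π/2), f x) = ∫ x in (π/2:ℝ)..π, f x := by
      have e := hrefl_int 0 (π/2)
      have e1 : π - π/2 = π/2 := by ring
      rw [e1, sub_zero] at e
      exact e
    rw [← hFK] at *
    rw [h02] at h01
    linarith [h01]
  have hFrefl : ∀ φ : ℝ, F (π - φ) = 2 * K - F φ := by
    intro φ
    have h01 : F (π - φ) + ∫ x in (π - φ)..π, f x = F π :=
      intervalIntegral.integral_add_adjacent_intervals (hfint 0 (π - φ)) (hfint (π - φ) π)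
    have h02 : (∫ x in (0:ℝ)..φ, f x) = ∫ x in (π - φ)..π, f x := by
      have e := hrefl_int 0 φ
      rw [sub_zero] at e
      exact e
    rw [hFpi] at h01
    rw [hFdef] at *
    linarith [h01, h02]
  have hamrefl : ∀ u : ℝ, am (2 * K - u) k = π - am u k := by
    intro u
    apply hFmono.injective
    rw [hFam, hFrefl, hFam]
  -- key: for 6/5 ≤ u ≤ K, sin (am u k) ≥ 3/4
  have hkey : ∀ u : ℝ, 6 / 5 ≤ u → u ≤ K → 3 / 4 ≤ Real.sin (am u k) := by
    intro u hu1 hu2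
    set φ : ℝ := am u k with hφdef
    have hφpos : 0 < φ := by
      rw [hφdef, ← ham0]
      exact hamMono (by linarith)
    have hφle : φ ≤ π / 2 := by
      rw [hφdef, ← hamK]
      exact hamMono.monotone hu2
    rcases eq_or_lt_of_le hφle with heq | hlt
    · rw [heq, Real.sin_pi_div_two]; norm_num
    · by_contra hcon
      push_neg at hcon
      have hs0 : 0 ≤ Real.sin φ := Real.sin_nonneg_of_nonneg_of_le_pi hφpos.le (by linarith)
      have hcospos : ∀ x : ℝ, x ∈ Set.uIcc 0 φ → 0 < Real.cos x := by
        intro x hx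
        rw [Set.uIcc_of_le hφpos.le] at hx
        apply Real.cos_pos_of_mem_Ioo
        constructor
        · linarith [hx.1, hπ]
        · linarith [hx.2, hlt]
      set g : ℝ → ℝ := fun x => (Real.log (1 + Real.sin x) - Real.log (1 - Real.sin x)) / 2
        with hgdef
      have hgder : ∀ x ∈ Set.uIcc (0:ℝ) φ, HasDerivAt g (1 / Real.cos x) x := by
        intro x hx
        have hcx := hcospos x hx
        have hpyth : Real.sin x ^ 2 + Real.cos x ^ 2 = 1 := Real.sin_sq_add_cos_sq x
        have hsx1 : Real.sin x < 1 := by nlinarith [Real.sin_le_one x]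
        have hsxm : -1 < Real.sin x := by nlinarith [Real.neg_one_le_sin x]
        have h1 : HasDerivAt (fun y : ℝ => 1 + Real.sin y) (Real.cos x) x := by
          simpa using (Real.hasDerivAt_sin x).const_add (1:ℝ)
        have h2 : HasDerivAt (fun y : ℝ => 1 - Real.sin y) (-(Real.cos x)) x := by
          simpa using (Real.hasDerivAt_sin x).const_sub (1:ℝ)
        have h3 := (h1.log (by exact ne_of_gt (by nlinarith))).sub (h2.log (by exact ne_of_gt (by nlinarith)))
        have h4 := h3.div_const 2
        have e : (Real.cos x / (1 + Real.sin x) - -Real.cos x / (1 - Real.sin x)) / 2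
            = 1 / Real.cos x := by
          have hd1 : (0:ℝ) < 1 + Real.sin x := by nlinarith
          have hd2 : (0:ℝ) < 1 - Real.sin x := by nlinarith
          field_simp
          nlinarith [hpyth, sq_nonneg (Real.cos x), sq_nonneg (Real.sin x)]
        rw [e] at h4
        exact h4
      have hInt : IntervalIntegrable (fun x => 1 / Real.cos x) volume 0 φ := by
        apply ContinuousOn.intervalIntegrable
        apply ContinuousOn.div continuousOn_const Real.continuous_cos.continuousOn
        exact fun x hx => (hcospos x hx).ne'
      have hFTC : (∫ x in (0:ℝ)..φ, 1 / Real.cos x) = g φ - g 0 :=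
        intervalIntegral.integral_eq_sub_of_hasDerivAt hgder hInt
      have hg0 : g 0 = 0 := by simp [hgdef]
      have hcomp : F φ ≤ ∫ x in (0:ℝ)..φ, 1 / Real.cos x := by
        apply intervalIntegral.integral_mono_on hφpos.le (hfint 0 φ) hInt
        intro x hx
        have hcx : 0 < Real.cos x := hcospos x (by rw [Set.uIcc_of_le hφpos.le]; exact hx)
        rw [hfdef]
        simp only []
        apply one_div_le_one_div_of_le hcx
        calc Real.cos x ≤ |Real.cos x| := le_abs_self _
          _ = Real.sqrt (Real.cos x ^ 2) := (Real.sqrt_sq_eq_abs _).symm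
          _ ≤ Real.sqrt (1 - k ^ 2 * Real.sin x ^ 2) := Real.sqrt_le_sqrt (by
              have hk2 : k ^ 2 ≤ 1 := by nlinarith
              nlinarith [Real.sin_sq_add_cos_sq x,
                mul_nonneg (sq_nonneg (Real.sin x)) (sub_nonneg.2 hk2)])
      have hu : u ≤ g φ := by
        have hFphi : F φ = u := hFam u
        rw [hFTC, hg0] at hcomp
        linarith
      have hgub : g φ < 6 / 5 := by
        rw [hgdef]
        simp only []
        have hlog : Real.log (1 + Real.sin φ) - Real.log (1 - Real.sin φ) < Real.log 7 := by
          rw [← Real.log_div (by linarith) (by linarith)]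
          apply Real.log_lt_log (div_pos (by linarith) (by linarith))
          rw [div_lt_iff₀ (by linarith)]
          linarith
        have hlog7 : Real.log 7 < 12 / 5 := by
          rw [Real.log_lt_iff_lt_exp (by norm_num)]
          have he : Real.exp 2 ≤ Real.exp (12 / 5) := Real.exp_le_exp.2 (by norm_num)
          have e2 : Real.exp 2 = Real.exp 1 * Real.exp 1 := by
            rw [← Real.exp_add]; norm_num
          nlinarith [Real.exp_one_gt_d9]
        linarith
      linarith
  -- combine with reflection
  have hmain : ∀ u : ℝ, 6 / 5 ≤ u → u ≤ 2 * K - 6 / 5 → 3 / 4 ≤ Real.sin (am u k) := by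
    intro u hu1 hu2
    rcases le_or_gt u K with hc | hc
    · exact hkey u hu1 hc
    · have h3 := hkey (2 * K - u) (by linarith) (by linarith)
      rw [hamrefl u, Real.sin_pi_sub] at h3
      exact h3
  have hkinv : 1 ≤ k⁻¹ := by
    rw [le_inv_comm₀] <;> simp [hk0, hk1.le]
  have h2K : 2 * K = Δ * k⁻¹ := by
    field_simp
    linarith [hkΔ]
  have ht0 : 0 < t := by linarith
  have hu1 : 6 / 5 ≤ k⁻¹ * t := by nlinarith
  have hu2 : k⁻¹ * t ≤ 2 * K - 6 / 5 := by
    have e : 2 * K - k⁻¹ * t = (Δ - t) * k⁻¹ := by rw [h2K]; ring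
    nlinarith [e, hkinv, h2]
  have hsin := hmain _ hu1 hu2
  set φ := am (k⁻¹ * t) k
  have e1 : Real.cos (π + 2 * φ) = -(Real.cos (2 * φ)) := by
    rw [Real.cos_add]
    simp [Real.cos_pi, Real.sin_pi]
  have e2 : Real.cos (2 * φ) = 1 - 2 * Real.sin φ ^ 2 := by
    have := Real.cos_two_mul φ
    have := Real.sin_sq_add_cos_sq φ
    linarith
  rw [e1, e2]
  nlinarith [hsin]

open Real Matrix Finset

def triMat (n : ℕ) (d : Fin n → ℝ) : Matrix (Fin n) (Fin n) ℝ :=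
  Matrix.of fun i j =>
    if i = j then d i else if (i : ℕ) + 1 = (j : ℕ) ∨ (j : ℕ) + 1 = (i : ℕ) then -1 else 0

lemma sum_ind_succ (n : ℕ) (x : Fin n → ℝ) (i : Fin n) :
    (∑ j : Fin n, if (j : ℕ) + 1 = (i : ℕ) + 1 then x j else 0) = x i := by
  rw [Finset.sum_eq_single i]
  · simp
  · intro b _ hb
    have : (b : ℕ) ≠ (i : ℕ) := fun hc => hb (Fin.ext hc)
    simp [this]
  · simp

lemma quad_form_lower (n : ℕ) (d : Fin n → ℝ) (μ : ℝ) (W : ℕ → ℝ)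
    (hW : ∀ m, m ≤ n + 1 → 0 < W m)
    (hcond : ∀ i : Fin n, W i + W ((i : ℕ) + 2) ≤ (d i - μ) * W ((i : ℕ) + 1))
    (x : Fin n → ℝ) :
    μ * (∑ j, x j ^ 2) ≤ x ⬝ᵥ (triMat n d *ᵥ x) := by
  classical
  set Y : ℕ → ℝ := fun q => ∑ j : Fin n, if (j : ℕ) + 1 = q then x j else 0 with hY
  set DD : ℕ → ℝ := fun q => ∑ j : Fin n, if (j : ℕ) + 1 = q then d j else 0 with hDD
  have hY0 : Y 0 = 0 := by
    simp [hY]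
  have hYn : Y (n + 1) = 0 := by
    apply Finset.sum_eq_zero
    intro j _
    have : (j : ℕ) + 1 ≠ n + 1 := by omega
    simp [this, j.isLt.ne]
  have hYi : ∀ i : Fin n, Y ((i : ℕ) + 1) = x i := fun i => sum_ind_succ n x i
  have hDi : ∀ i : Fin n, DD ((i : ℕ) + 1) = d i := fun i => sum_ind_succ n d i
  -- row computation
  have hrow : ∀ i : Fin n, (∑ j, triMat n d i j * x j)
      = d i * x i - Y (i : ℕ) - Y ((i : ℕ) + 2) := by
    intro i
    have hsplit : ∀ j : Fin n, triMat n d i j * x j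
        = (if j = i then d j * x j else 0) - (if (j : ℕ) + 1 = (i : ℕ) then x j else 0)
          - (if (j : ℕ) + 1 = (i : ℕ) + 2 then x j else 0) := by
      intro j
      simp only [triMat, Matrix.of_apply]
      rcases eq_or_ne i j with rfl | hij
      · simp
      · have h1 : ¬ (j = i) := fun hc => hij hc.symm
        by_cases h2 : (j : ℕ) + 1 = (i : ℕ)
        · have h3 : ¬ ((j : ℕ) + 1 = (i : ℕ) + 2) := by omega
          simp [hij, h1, h2, h3]
        · by_cases h4 : (j : ℕ) + 1 = (i : ℕ) + 2
          · have h5 : (i : ℕ) + 1 = (j : ℕ) := by omega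
            simp [hij, h1, h2, h4, h5]
          · have h6 : ¬ ((i : ℕ) + 1 = (j : ℕ)) := by omega
            simp [hij, h1, h2, h4, h6, Ne.symm h6]
    calc (∑ j, triMat n d i j * x j)
        = ∑ j : Fin n, ((if j = i then d j * x j else 0)
            - (if (j : ℕ) + 1 = (i : ℕ) then x j else 0)
            - (if (j : ℕ) + 1 = (i : ℕ) + 2 then x j else 0)) := by
          exact Finset.sum_congr rfl (fun j _ => hsplit j)
      _ = d i * x i - Y (i : ℕ) - Y ((i : ℕ) + 2) := by
          rw [Finset.sum_sub_distrib, Finset.sum_sub_distrib, Finset.sum_ite_eq']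
          simp [hY]
  -- main identity
  have hdot : x ⬝ᵥ (triMat n d *ᵥ x)
      = ∑ q ∈ Finset.range (n + 1), (DD q * Y q ^ 2 - 2 * (Y q * Y (q + 1))) := by
    have h1 : x ⬝ᵥ (triMat n d *ᵥ x) = ∑ i : Fin n, x i * (∑ j, triMat n d i j * x j) := by
      simp [dotProduct, Matrix.mulVec]
    rw [h1]
    have h2 : ∀ i : Fin n, x i * (∑ j, triMat n d i j * x j)
        = (fun p => Y (p + 1) * (DD (p + 1) * Y (p + 1) - Y p - Y (p + 2))) (i : ℕ) := by
      intro i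
      rw [hrow i]
      simp only []
      rw [hYi i, hDi i]
    rw [Finset.sum_congr rfl (fun i _ => h2 i), Fin.sum_univ_eq_sum_range (fun p => Y (p + 1) * (DD (p + 1) * Y (p + 1) - Y p - Y (p + 2))) n]
    -- now pure ℕ manipulation
    rw [Finset.sum_range_succ' (fun q => DD q * Y q ^ 2 - 2 * (Y q * Y (q + 1))) n]
    have hz : DD 0 * Y 0 ^ 2 - 2 * (Y 0 * Y 1) = 0 := by simp [hY0]
    rw [hz, add_zero]
    have hshift : ∑ p ∈ Finset.range n, Y (p + 1) * Y (p + 2)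
        = ∑ p ∈ Finset.range n, Y p * Y (p + 1) := by
      have e1 : ∑ q ∈ Finset.range (n + 1), Y q * Y (q + 1)
          = ∑ p ∈ Finset.range n, Y (p + 1) * Y (p + 2) + Y 0 * Y 1 :=
        Finset.sum_range_succ' (fun q => Y q * Y (q + 1)) n
      have e2 : ∑ q ∈ Finset.range (n + 1), Y q * Y (q + 1)
          = ∑ p ∈ Finset.range n, Y p * Y (p + 1) + Y n * Y (n + 1) :=
        Finset.sum_range_succ (fun q => Y q * Y (q + 1)) n
      have e3 := e1.symm.trans e2
      rw [hY0, hYn] at e3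
      simpa using e3
    have TA : ∑ p ∈ Finset.range n, Y (p + 1) * (DD (p + 1) * Y (p + 1) - Y p - Y (p + 2))
        = (∑ p ∈ Finset.range n, DD (p + 1) * Y (p + 1) ^ 2)
          - (∑ p ∈ Finset.range n, Y p * Y (p + 1))
          - (∑ p ∈ Finset.range n, Y (p + 1) * Y (p + 2)) := by
      rw [← Finset.sum_sub_distrib, ← Finset.sum_sub_distrib]
      exact Finset.sum_congr rfl fun p _ => by ring
    have TB : ∑ p ∈ Finset.range n, (DD (p + 1) * Y (p + 1) ^ 2 - 2 * (Y (p + 1) * Y (p + 2)))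
        = (∑ p ∈ Finset.range n, DD (p + 1) * Y (p + 1) ^ 2)
          - (∑ p ∈ Finset.range n, Y (p + 1) * Y (p + 2))
          - (∑ p ∈ Finset.range n, Y (p + 1) * Y (p + 2)) := by
      rw [← Finset.sum_sub_distrib, ← Finset.sum_sub_distrib]
      exact Finset.sum_congr rfl fun p _ => by ring
    rw [TA, TB, hshift]
  -- Claim 2 : the inequality
  have hsq : ∑ j, x j ^ 2 = ∑ q ∈ Finset.range (n + 1), Y q ^ 2 := by
    rw [Finset.sum_range_succ' (fun q => Y q ^ 2) n, hY0]
    have e : ∑ p ∈ Finset.range n, Y (p + 1) ^ 2 = ∑ j : Fin n, x j ^ 2 := by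
      rw [← Fin.sum_univ_eq_sum_range (fun p => Y (p + 1) ^ 2) n]
      exact Finset.sum_congr rfl fun j _ => by rw [hYi j]
    rw [e]; simp
  have hsh2 : ∑ q ∈ Finset.range (n + 1), W q / W (q + 1) * Y (q + 1) ^ 2
      = ∑ q ∈ Finset.range (n + 1), W (q - 1) / W q * Y q ^ 2 := by
    rw [Finset.sum_range_succ' (fun q => W (q - 1) / W q * Y q ^ 2) n]
    rw [Finset.sum_range_succ (fun q => W q / W (q + 1) * Y (q + 1) ^ 2) n]
    rw [hYn, hY0]
    simp
  have amgm : ∀ q ∈ Finset.range (n + 1),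
      DD q * Y q ^ 2 - (W (q + 1) / W q * Y q ^ 2 + W q / W (q + 1) * Y (q + 1) ^ 2)
        ≤ DD q * Y q ^ 2 - 2 * (Y q * Y (q + 1)) := by
    intro q hq
    have hq' : q < n + 1 := Finset.mem_range.1 hq
    have ha : 0 < W q := hW q (by omega)
    have hb : 0 < W (q + 1) := hW (q + 1) (by omega)
    have key : 2 * (Y q * Y (q + 1))
        ≤ W (q + 1) / W q * Y q ^ 2 + W q / W (q + 1) * Y (q + 1) ^ 2 := by
      have e : W (q + 1) / W q * Y q ^ 2 + W q / W (q + 1) * Y (q + 1) ^ 2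
          - 2 * (Y q * Y (q + 1))
          = (W (q + 1) * Y q - W q * Y (q + 1)) ^ 2 / (W q * W (q + 1)) := by
        field_simp
        ring
      nlinarith [div_nonneg (sq_nonneg (W (q + 1) * Y q - W q * Y (q + 1)))
        (le_of_lt (mul_pos ha hb)), e]
    linarith
  have hterm : ∀ q ∈ Finset.range (n + 1),
      μ * Y q ^ 2 ≤ DD q * Y q ^ 2 - W (q + 1) / W q * Y q ^ 2 - W (q - 1) / W q * Y q ^ 2 := by
    intro q hq
    rcases Nat.eq_zero_or_pos q with rfl | hq1
    · simp [hY0]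
    · have hq' : q < n + 1 := Finset.mem_range.1 hq
      set i : Fin n := ⟨q - 1, by omega⟩ with hi
      have hiq : (i : ℕ) + 1 = q := by simp [hi]; omega
      have hc := hcond i
      rw [hiq] at hc
      have hDq : DD q = d i := by rw [← hiq]; exact hDi i
      have hWq : 0 < W q := hW q (by omega)
      have hcoef : W (q + 1) / W q + W (q - 1) / W q ≤ DD q - μ := by
        rw [← add_div, div_le_iff₀ hWq, hDq]
        have : (i : ℕ) = q - 1 := by simp [hi]
        calc W (q + 1) + W (q - 1) = W (q - 1) + W (q + 1) := by ring
          _ ≤ (d i - μ) * W q := by rw [← this, ← hiq] at *; exact hc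
      nlinarith [sq_nonneg (Y q), hcoef]
  calc μ * (∑ j, x j ^ 2) = ∑ q ∈ Finset.range (n + 1), μ * Y q ^ 2 := by
        rw [hsq, Finset.mul_sum]
    _ ≤ ∑ q ∈ Finset.range (n + 1),
        (DD q * Y q ^ 2 - W (q + 1) / W q * Y q ^ 2 - W (q - 1) / W q * Y q ^ 2) :=
        Finset.sum_le_sum hterm
    _ = ∑ q ∈ Finset.range (n + 1),
        (DD q * Y q ^ 2 - (W (q + 1) / W q * Y q ^ 2 + W q / W (q + 1) * Y (q + 1) ^ 2)) := by
        have l : ∑ q ∈ Finset.range (n + 1),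
            (DD q * Y q ^ 2 - W (q + 1) / W q * Y q ^ 2 - W (q - 1) / W q * Y q ^ 2)
            = (∑ q ∈ Finset.range (n + 1), (DD q * Y q ^ 2 - W (q + 1) / W q * Y q ^ 2))
              - ∑ q ∈ Finset.range (n + 1), W (q - 1) / W q * Y q ^ 2 :=
          Finset.sum_sub_distrib _ _
        have r : ∑ q ∈ Finset.range (n + 1),
            (DD q * Y q ^ 2 - (W (q + 1) / W q * Y q ^ 2 + W q / W (q + 1) * Y (q + 1) ^ 2))
            = (∑ q ∈ Finset.range (n + 1), (DD q * Y q ^ 2 - W (q + 1) / W q * Y q ^ 2))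
              - ∑ q ∈ Finset.range (n + 1), W q / W (q + 1) * Y (q + 1) ^ 2 := by
          rw [← Finset.sum_sub_distrib]
          exact Finset.sum_congr rfl fun q _ => by ring
        rw [l, r, hsh2]
    _ ≤ ∑ q ∈ Finset.range (n + 1), (DD q * Y q ^ 2 - 2 * (Y q * Y (q + 1))) :=
        Finset.sum_le_sum amgm
    _ = x ⬝ᵥ (triMat n d *ᵥ x) := hdot.symm

open Real

noncomputable def thet (Δ : ℝ) : ℝ := π / (2 * Δ)
noncomputable def WL (Δ h t : ℝ) : ℝ :=
  Real.sin (thet Δ * (36 / 5)) / Real.sin (26 / 25 * (6 / 5 + h)) * Real.sin (26 / 25 * (t + h))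
noncomputable def WM (Δ t : ℝ) : ℝ := Real.sin (thet Δ * (t + 6))
noncomputable def WR (Δ h t : ℝ) : ℝ :=
  Real.sin (thet Δ * (Δ - 6 / 5 + 6)) / Real.sin (26 / 25 * (6 / 5 + h))
    * Real.sin (26 / 25 * (Δ - t + h))
noncomputable def Wfun (Δ h t : ℝ) : ℝ :=
  if t < 6 / 5 then WL Δ h t else if t ≤ Δ - 6 / 5 then WM Δ t else WR Δ h t

lemma cos_quad' (x : ℝ) : 1 - x ^ 2 / 2 ≤ Real.cos x := by
  have h1 : Real.cos x = 1 - 2 * Real.sin (x / 2) ^ 2 := by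
    have hcs := Real.cos_sq (x / 2)
    have h2 : Real.sin (x / 2) ^ 2 + Real.cos (x / 2) ^ 2 = 1 := Real.sin_sq_add_cos_sq _
    have h3 : 2 * (x / 2) = x := by ring
    rw [h3] at hcs
    linarith
  have h4 : Real.sin (x / 2) ^ 2 ≤ (x / 2) ^ 2 := Real.sin_sq_le_sq
  nlinarith

lemma cos_quart' {x : ℝ} (h1 : 0 ≤ x) (h2 : x ≤ 2) :
    1 - x ^ 2 / 2 + x ^ 4 / 32 ≤ Real.cos x := by
  have hhalf : 1 - (x / 2) ^ 2 / 2 ≤ Real.cos (x / 2) := cos_quad' (x / 2)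
  have hnn : (0:ℝ) ≤ 1 - (x / 2) ^ 2 / 2 := by nlinarith
  have hdouble : Real.cos x = 2 * Real.cos (x / 2) ^ 2 - 1 := by
    have hc := Real.cos_two_mul (x / 2)
    have h3 : 2 * (x / 2) = x := by ring
    rw [h3] at hc
    linarith
  nlinarith [sq_nonneg (Real.cos (x / 2) - (1 - (x / 2) ^ 2 / 2))]

lemma cos_lb_27 {x : ℝ} (h1 : 0 ≤ x) (h2 : x ≤ 3172 / 2500) : 27 / 100 ≤ Real.cos x := by
  have h3 := cos_quart' h1 (by linarith)
  nlinarith [sq_nonneg x, sq_nonneg (x ^ 2 - (3172 / 2500) ^ 2),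
    mul_nonneg (mul_nonneg h1 h1) (mul_nonneg h1 h1)]

lemma two_sub_two_cos_ge' {z : ℝ} (h1 : 0 ≤ z) (h2 : z ≤ 1) :
    z ^ 2 * (1 - z ^ 2 / 2) ≤ 2 - 2 * Real.cos z := by
  have hs : Real.cos z = 1 - 2 * Real.sin (z / 2) ^ 2 := by
    have hcs := Real.cos_sq (z / 2)
    have h2' : Real.sin (z / 2) ^ 2 + Real.cos (z / 2) ^ 2 = 1 := Real.sin_sq_add_cos_sq _
    have h3 : 2 * (z / 2) = z := by ring
    rw [h3] at hcs
    linarith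
  rcases eq_or_lt_of_le h1 with rfl | hz0
  · simp
  have hsin : z / 2 - (z / 2) ^ 3 / 4 < Real.sin (z / 2) :=
    by have := Real.sin_gt_sub_cube (x := z / 2) (by linarith); have : 0 ≤ (z / 2) ^ 3 := by positivity
       linarith
  have hz3 : z ^ 3 ≤ z := by nlinarith [mul_pos hz0 hz0]
  have hpos : 0 < z / 2 - (z / 2) ^ 3 / 4 := by nlinarith
  have hsq : (z / 2 - (z / 2) ^ 3 / 4) ^ 2 ≤ Real.sin (z / 2) ^ 2 := by
    nlinarith [hsin, hpos]
  nlinarith [hsq, sq_nonneg z, sq_nonneg (z * z), mul_nonneg (sq_nonneg z) (sq_nonneg z)]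

lemma omega_coef {h c μ : ℝ} (hh0 : 0 < h) (hh : h ≤ 1 / 100) (hc1 : -1 ≤ c)
    (hμ : μ ≤ 1 / 16) :
    2 * Real.cos (26 / 25 * h) ≤ 2 + h ^ 2 * (c - μ) := by
  have hz := two_sub_two_cos_ge' (z := 26 / 25 * h) (by positivity) (by nlinarith)
  have hh2 : h ^ 2 ≤ 1 / 10000 := by nlinarith
  nlinarith [sq_nonneg h, mul_nonneg (sq_nonneg h) (sq_nonneg h)]

lemma pure_sine_sum (a δ : ℝ) :
    Real.sin (a - δ) + Real.sin (a + δ) = 2 * Real.cos δ * Real.sin a := by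
  rw [Real.sin_sub, Real.sin_add]; ring

set_option maxHeartbeats 10000000 in
lemma Wfun_main (Δ h : ℝ) (hΔ : 3 * π ≤ Δ) (hh0 : 0 < h) (hh : h ≤ 1 / 100) :
    (∀ t, 0 ≤ t → t ≤ Δ → 0 < Wfun Δ h t) ∧
    (∀ t c, h ≤ t → t ≤ Δ - h → -1 ≤ c → (6 / 5 ≤ t → t ≤ Δ - 6 / 5 → 1 / 8 ≤ c) →
      Wfun Δ h (t - h) + Wfun Δ h (t + h)
        ≤ (2 + h ^ 2 * (c - (3 * π / (4 * Δ)) ^ 2)) * Wfun Δ h t) := by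
  have hπl : (3.14 : ℝ) < π := Real.pi_gt_d2
  have hπu : π < 3.15 := Real.pi_lt_d2
  have hΔ0 : 0 < Δ := by nlinarith
  have hΔ94 : (9.42 : ℝ) ≤ Δ := by nlinarith
  set θ : ℝ := thet Δ with hθdef
  have hθpos : 0 < θ := by rw [hθdef, thet]; positivity
  have hθΔ : θ * Δ = π / 2 := by rw [hθdef, thet]; field_simp
  have hθ6 : θ ≤ 1 / 6 := by
    rw [hθdef, thet, div_le_iff₀ (by linarith)]
    nlinarith
  -- the denominator S
  set S : ℝ := Real.sin (26 / 25 * (6 / 5 + h)) with hSdef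
  have hSarg1 : (156 / 125 : ℝ) ≤ 26 / 25 * (6 / 5 + h) := by nlinarith
  have hSarg2 : (26 / 25 : ℝ) * (6 / 5 + h) ≤ 3146 / 2500 := by nlinarith
  have hS : 0 < S := by
    rw [hSdef]
    apply Real.sin_pos_of_pos_of_lt_pi (by nlinarith) (by nlinarith)
  have hS1 : S ≤ 1 := Real.sin_le_one _
  -- the numerator C (left)
  set C : ℝ := Real.sin (θ * (36 / 5)) with hCdef
  have hCarg : 0 < θ * (36 / 5) ∧ θ * (36 / 5) ≤ 6 / 5 := by
    constructor
    · positivity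
    · nlinarith
  have hC : 0 < C := by
    rw [hCdef]
    apply Real.sin_pos_of_pos_of_lt_pi hCarg.1 (by nlinarith [hCarg.2])
  have hCJ : 36 / (5 * Δ) ≤ C := by
    rw [hCdef]
    have hj := Real.mul_le_sin (le_of_lt hCarg.1) (by nlinarith [hCarg.2, hπl] : θ * (36 / 5) ≤ π / 2)
    have he : 2 / π * (θ * (36 / 5)) = 36 / (5 * Δ) := by
      rw [hθdef, thet]
      field_simp
    rw [he] at hj
    exact hj
  -- the numerator CR (right)
  set CR : ℝ := Real.sin (θ * (Δ - 6 / 5 + 6)) with hCRdef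
  have hCReq : CR = Real.cos (θ * (24 / 5)) := by
    rw [hCRdef]
    have e : θ * (Δ - 6 / 5 + 6) = π / 2 + θ * (24 / 5) := by
      have : θ * (Δ - 6 / 5 + 6) = θ * Δ + θ * (24 / 5) := by ring
      rw [this, hθΔ]
    rw [e, Real.sin_add, Real.sin_pi_div_two, Real.cos_pi_div_two]
    ring
  have hCR68 : 17 / 25 ≤ CR := by
    rw [hCReq]
    have := cos_quad' (θ * (24 / 5))
    nlinarith
  have hCR1 : CR ≤ 1 := by rw [hCRdef]; exact Real.sin_le_one _
  have hCRpos : 0 < CR := by linarith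
  -- left crossing function G
  set G : ℝ → ℝ := fun s => Real.sin (θ * (s + 6)) * S - C * Real.sin (26 / 25 * (s + h))
    with hGdef
  have hGder : ∀ s : ℝ, HasDerivAt G
      (Real.cos (θ * (s + 6)) * θ * S - C * (Real.cos (26 / 25 * (s + h)) * (26 / 25))) s := by
    intro s
    have h1 : HasDerivAt (fun s : ℝ => θ * (s + 6)) θ s := by
      simpa using ((hasDerivAt_id s).add_const (6 : ℝ)).const_mul θ
    have h2 := (Real.hasDerivAt_sin (θ * (s + 6))).comp s h1
    have h3 : HasDerivAt (fun s : ℝ => 26 / 25 * (s + h)) (26 / 25) s := by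
      simpa using ((hasDerivAt_id s).add_const h).const_mul (26 / 25 : ℝ)
    have h4 := (Real.hasDerivAt_sin (26 / 25 * (s + h))).comp s h3
    exact (h2.mul_const S).sub (h4.const_mul C)
  have hGanti : StrictAntiOn G (Set.Icc (6 / 5 - h : ℝ) (6 / 5 + h)) := by
    apply strictAntiOn_of_deriv_neg (convex_Icc _ _)
    · exact fun s _ => ((hGder s).differentiableAt.continuousAt).continuousWithinAt
    · intro s hs
      rw [interior_Icc] at hs
      rw [(hGder s).deriv]
      have hs1 : 6 / 5 - h < s := hs.1
      have hs2 : s < 6 / 5 + h := hs.2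
      have hx0 : (0:ℝ) ≤ 26 / 25 * (s + h) := by nlinarith
      have hx1 : 26 / 25 * (s + h) ≤ 3172 / 2500 := by nlinarith
      have hcos := cos_lb_27 hx0 hx1
      have hcS : Real.cos (θ * (s + 6)) * S ≤ 1 := by
        calc Real.cos (θ * (s + 6)) * S ≤ 1 * S :=
              mul_le_mul_of_nonneg_right (Real.cos_le_one _) hS.le
          _ = S := one_mul _
          _ ≤ 1 := hS1
      have e1 : Real.cos (θ * (s + 6)) * θ * S ≤ θ := by
        nlinarith [mul_le_mul_of_nonneg_left hcS hθpos.le]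
      have e3 : 36 / (5 * Δ) * (27 / 100 * (26 / 25))
          ≤ C * (Real.cos (26 / 25 * (s + h)) * (26 / 25)) := by
        apply mul_le_mul hCJ (by nlinarith) (by positivity) (le_of_lt hC)
      have e4 : θ < 36 / (5 * Δ) * (27 / 100 * (26 / 25)) := by
        rw [hθdef, thet, div_lt_iff₀ (by linarith)]
        have e5 : 36 / (5 * Δ) * (27 / 100 * (26 / 25)) * (2 * Δ)
            = 2 * (36 * 27 * 26) / (5 * 100 * 25) := by
          field_simp
        rw [e5]
        nlinarith
      linarith
  have hGzero : G (6 / 5) = 0 := by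
    simp only [hGdef]
    have e : θ * (6 / 5 + 6) = θ * (36 / 5) := by ring
    rw [e, ← hCdef, ← hSdef]
    ring
  have hina : ∀ s : ℝ, 6 / 5 - h ≤ s → s ≤ 6 / 5 + h → s ∈ Set.Icc (6 / 5 - h : ℝ) (6 / 5 + h) :=
    fun s h1 h2 => Set.mem_Icc.2 ⟨h1, h2⟩
  have hGa : ∀ s : ℝ, 6 / 5 - h ≤ s → s ≤ 6 / 5 → C * Real.sin (26 / 25 * (s + h)) ≤ Real.sin (θ * (s + 6)) * S := by
    intro s h1 h2
    rcases eq_or_lt_of_le h2 with rfl | h2'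
    · have := hGzero
      simp only [hGdef] at this
      linarith [this]
    · have := hGanti (hina s h1 (by linarith)) (hina (6/5) (by linarith) (by linarith)) h2'
      rw [hGzero] at this
      simp only [hGdef] at this
      linarith
  have hGb : ∀ s : ℝ, 6 / 5 ≤ s → s ≤ 6 / 5 + h → Real.sin (θ * (s + 6)) * S ≤ C * Real.sin (26 / 25 * (s + h)) := by
    intro s h1 h2
    rcases eq_or_lt_of_le h1 with rfl | h1'
    · have := hGzero
      simp only [hGdef] at this
      linarith [this]
    · have := hGanti (hina (6/5) (by linarith) (by linarith)) (hina s (by linarith) h2) h1'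
      rw [hGzero] at this
      simp only [hGdef] at this
      linarith
  -- right crossing function H
  set H : ℝ → ℝ := fun s => Real.sin (θ * (s + 6)) * S - CR * Real.sin (26 / 25 * (Δ - s + h))
    with hHdef
  have hHder : ∀ s : ℝ, HasDerivAt H
      (Real.cos (θ * (s + 6)) * θ * S - CR * (Real.cos (26 / 25 * (Δ - s + h)) * (26 / 25 * (-1)))) s := by
    intro s
    have h1 : HasDerivAt (fun s : ℝ => θ * (s + 6)) θ s := by
      simpa using ((hasDerivAt_id s).add_const (6 : ℝ)).const_mul θ
    have h2 := (Real.hasDerivAt_sin (θ * (s + 6))).comp s h1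
    have h3 : HasDerivAt (fun s : ℝ => 26 / 25 * (Δ - s + h)) (26 / 25 * (-1)) s := by
      have hb : HasDerivAt (fun s : ℝ => Δ - s + h) (-1) s := by
        simpa using ((hasDerivAt_id s).const_sub Δ).add_const h
      simpa using hb.const_mul (26 / 25 : ℝ)
    have h4 := (Real.hasDerivAt_sin (26 / 25 * (Δ - s + h))).comp s h3
    exact (h2.mul_const S).sub (h4.const_mul CR)
  have hHmono : StrictMonoOn H (Set.Icc (Δ - 6 / 5 - h : ℝ) (Δ - 6 / 5 + h)) := by
    apply strictMonoOn_of_deriv_pos (convex_Icc _ _)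
    · exact fun s _ => ((hHder s).differentiableAt.continuousAt).continuousWithinAt
    · intro s hs
      rw [interior_Icc] at hs
      rw [(hHder s).deriv]
      have hs1 : Δ - 6 / 5 - h < s := hs.1
      have hs2 : s < Δ - 6 / 5 + h := hs.2
      have hx0 : (0:ℝ) ≤ 26 / 25 * (Δ - s + h) := by nlinarith
      have hx1 : 26 / 25 * (Δ - s + h) ≤ 3172 / 2500 := by nlinarith
      have hcos := cos_lb_27 hx0 hx1
      -- rewrite the first cosine
      have e : θ * (s + 6) = π / 2 + θ * (s + 6 - Δ) := by
        have e2 : θ * (s + 6) = θ * Δ + θ * (s + 6 - Δ) := by ring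
        rw [e2, hθΔ]
      have ecos : Real.cos (θ * (s + 6)) = - Real.sin (θ * (s + 6 - Δ)) := by
        rw [e, Real.cos_add, Real.cos_pi_div_two, Real.sin_pi_div_two]
        ring
      have hy0 : 0 ≤ θ * (s + 6 - Δ) := by nlinarith
      have hy1 : θ * (s + 6 - Δ) ≤ θ * (24 / 5 + h) := by nlinarith
      have hsin_le : Real.sin (θ * (s + 6 - Δ)) ≤ θ * (24 / 5 + h) :=
        le_trans (Real.sin_le hy0) hy1
      have hsin_nn : 0 ≤ Real.sin (θ * (s + 6 - Δ)) := by
        apply Real.sin_nonneg_of_nonneg_of_le_pi hy0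
        nlinarith
      have q1 : Real.sin (θ * (s + 6 - Δ)) * S ≤ θ * (24 / 5 + h) := by
        calc Real.sin (θ * (s + 6 - Δ)) * S ≤ Real.sin (θ * (s + 6 - Δ)) * 1 :=
              mul_le_mul_of_nonneg_left hS1 hsin_nn
          _ = Real.sin (θ * (s + 6 - Δ)) := mul_one _
          _ ≤ θ * (24 / 5 + h) := hsin_le
      have e1 : - (θ * (24 / 5 + h)) * θ ≤ Real.cos (θ * (s + 6)) * θ * S := by
        rw [ecos]
        nlinarith [mul_le_mul_of_nonneg_right q1 hθpos.le]
      have e3 : 17 / 25 * (27 / 100 * (26 / 25))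
          ≤ CR * (Real.cos (26 / 25 * (Δ - s + h)) * (26 / 25)) := by
        apply mul_le_mul hCR68 (by nlinarith) (by positivity) (le_of_lt hCRpos)
      nlinarith [e1, e3, hθ6, hθpos]
  have hHzero : H (Δ - 6 / 5) = 0 := by
    simp only [hHdef]
    have e : Δ - (Δ - 6 / 5) + h = 6 / 5 + h := by ring
    rw [e, ← hCRdef, ← hSdef]
    ring
  have hinr : ∀ s : ℝ, Δ - 6 / 5 - h ≤ s → s ≤ Δ - 6 / 5 + h
      → s ∈ Set.Icc (Δ - 6 / 5 - h : ℝ) (Δ - 6 / 5 + h) :=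
    fun s h1 h2 => Set.mem_Icc.2 ⟨h1, h2⟩
  have hHa : ∀ s : ℝ, Δ - 6 / 5 ≤ s → s ≤ Δ - 6 / 5 + h
      → CR * Real.sin (26 / 25 * (Δ - s + h)) ≤ Real.sin (θ * (s + 6)) * S := by
    intro s h1 h2
    rcases eq_or_lt_of_le h1 with rfl | h1'
    · have := hHzero
      simp only [hHdef] at this
      linarith
    · have := hHmono (hinr (Δ - 6/5) (by linarith) (by linarith)) (hinr s (by linarith) h2) h1'
      rw [hHzero] at this
      simp only [hHdef] at this
      linarith
  have hHb : ∀ s : ℝ, Δ - 6 / 5 - h ≤ s → s ≤ Δ - 6 / 5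
      → Real.sin (θ * (s + 6)) * S ≤ CR * Real.sin (26 / 25 * (Δ - s + h)) := by
    intro s h1 h2
    rcases eq_or_lt_of_le h2 with rfl | h2'
    · have := hHzero
      simp only [hHdef] at this
      linarith
    · have := hHmono (hinr s h1 (by linarith)) (hinr (Δ - 6/5) (by linarith) (by linarith)) h2'
      rw [hHzero] at this
      simp only [hHdef] at this
      linarith
  -- positivity of components
  have hWLpos : ∀ s : ℝ, 0 ≤ s → s < 6 / 5 → 0 < WL Δ h s := by
    intro s h1 h2
    rw [WL, ← hθdef, ← hCdef, ← hSdef]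
    apply mul_pos (div_pos hC hS)
    apply Real.sin_pos_of_pos_of_lt_pi (by nlinarith)
    nlinarith
  have hWMpos : ∀ s : ℝ, 6 / 5 - h ≤ s → s ≤ Δ - 6 / 5 + h → 0 < WM Δ s := by
    intro s h1 h2
    rw [WM, ← hθdef]
    apply Real.sin_pos_of_pos_of_lt_pi (by nlinarith)
    have e1 : θ * (s + 6) ≤ π / 2 + θ * (24 / 5 + h) := by nlinarith
    nlinarith
  have hWRpos : ∀ s : ℝ, Δ - 6 / 5 < s → s ≤ Δ → 0 < WR Δ h s := by
    intro s h1 h2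
    rw [WR, ← hθdef, ← hCRdef, ← hSdef]
    apply mul_pos (div_pos hCRpos hS)
    apply Real.sin_pos_of_pos_of_lt_pi (by nlinarith)
    nlinarith
  -- evaluation helpers
  have hevL : ∀ s : ℝ, s < 6 / 5 → Wfun Δ h s = WL Δ h s := by
    intro s hs; rw [Wfun, if_pos hs]
  have hevM : ∀ s : ℝ, ¬ s < 6 / 5 → s ≤ Δ - 6 / 5 → Wfun Δ h s = WM Δ s := by
    intro s h1 h2; rw [Wfun, if_neg h1, if_pos h2]
  have hevR : ∀ s : ℝ, ¬ s < 6 / 5 → ¬ s ≤ Δ - 6 / 5 → Wfun Δ h s = WR Δ h s := by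
    intro s h1 h2; rw [Wfun, if_neg h1, if_neg h2]
  have hpos : ∀ t, 0 ≤ t → t ≤ Δ → 0 < Wfun Δ h t := by
    intro t h1 h2
    rw [Wfun]
    split_ifs with c1 c2
    · exact hWLpos t h1 c1
    · exact hWMpos t (by push_neg at c1; linarith) (by linarith)
    · push_neg at c2
      exact hWRpos t c2 h2
  -- pure-branch sums
  have hLsum : ∀ s : ℝ, WL Δ h (s - h) + WL Δ h (s + h)
      = 2 * Real.cos (26 / 25 * h) * WL Δ h s := by
    intro s
    rw [WL, WL, WL, ← hθdef, ← hCdef, ← hSdef]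
    have e1 : 26 / 25 * (s - h + h) = 26 / 25 * (s + h) - 26 / 25 * h := by ring
    have e2 : 26 / 25 * (s + h + h) = 26 / 25 * (s + h) + 26 / 25 * h := by ring
    rw [e1, e2, Real.sin_sub, Real.sin_add]
    ring
  have hMsum : ∀ s : ℝ, WM Δ (s - h) + WM Δ (s + h) = 2 * Real.cos (θ * h) * WM Δ s := by
    intro s
    rw [WM, WM, WM, ← hθdef]
    have e1 : θ * (s - h + 6) = θ * (s + 6) - θ * h := by ring
    have e2 : θ * (s + h + 6) = θ * (s + 6) + θ * h := by ring
    rw [e1, e2, Real.sin_sub, Real.sin_add]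
    ring
  have hRsum : ∀ s : ℝ, WR Δ h (s - h) + WR Δ h (s + h)
      = 2 * Real.cos (26 / 25 * h) * WR Δ h s := by
    intro s
    rw [WR, WR, WR, ← hθdef, ← hCRdef, ← hSdef]
    have e1 : 26 / 25 * (Δ - (s - h) + h) = 26 / 25 * (Δ - s + h) + 26 / 25 * h := by ring
    have e2 : 26 / 25 * (Δ - (s + h) + h) = 26 / 25 * (Δ - s + h) - 26 / 25 * h := by ring
    rw [e1, e2, Real.sin_sub, Real.sin_add]
    ring
  -- branch comparisons
  have hWLM : ∀ s : ℝ, 6 / 5 - h ≤ s → s ≤ 6 / 5 → WL Δ h s ≤ WM Δ s := by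
    intro s h1 h2
    rw [WL, WM, ← hθdef, ← hCdef, ← hSdef, div_mul_eq_mul_div, div_le_iff₀ hS]
    exact hGa s h1 h2
  have hWML : ∀ s : ℝ, 6 / 5 ≤ s → s ≤ 6 / 5 + h → WM Δ s ≤ WL Δ h s := by
    intro s h1 h2
    rw [WL, WM, ← hθdef, ← hCdef, ← hSdef, div_mul_eq_mul_div, le_div_iff₀ hS]
    exact hGb s h1 h2
  have hWRM : ∀ s : ℝ, Δ - 6 / 5 ≤ s → s ≤ Δ - 6 / 5 + h → WR Δ h s ≤ WM Δ s := by
    intro s h1 h2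
    rw [WR, WM, ← hθdef, ← hCRdef, ← hSdef, div_mul_eq_mul_div, div_le_iff₀ hS]
    exact hHa s h1 h2
  have hWMR : ∀ s : ℝ, Δ - 6 / 5 - h ≤ s → s ≤ Δ - 6 / 5 → WM Δ s ≤ WR Δ h s := by
    intro s h1 h2
    rw [WR, WM, ← hθdef, ← hCRdef, ← hSdef, div_mul_eq_mul_div, le_div_iff₀ hS]
    exact hHb s h1 h2
  refine ⟨hpos, ?_⟩
  intro t c ht1 ht2 hc1 hc8
  set μ : ℝ := (3 * π / (4 * Δ)) ^ 2 with hμdef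
  have hμ16 : μ ≤ 1 / 16 := by
    rw [hμdef]
    have h1 : 3 * π / (4 * Δ) ≤ 1 / 4 := by
      rw [div_le_iff₀ (by linarith)]
      nlinarith
    have h2 : (0:ℝ) ≤ 3 * π / (4 * Δ) := by positivity
    nlinarith
  have homega : ∀ x : ℝ, 0 < x →
      2 * Real.cos (26 / 25 * h) * x ≤ (2 + h ^ 2 * (c - μ)) * x := by
    intro x hx
    exact mul_le_mul_of_nonneg_right (omega_coef hh0 hh hc1 hμ16) hx.le
  rcases lt_or_ge t (6 / 5) with hL | hge
  · -- left region
    have hWt := hevL t hL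
    have hWtm := hevL (t - h) (by linarith)
    have hpt : 0 < WL Δ h t := hWLpos t (by linarith) hL
    have key : Wfun Δ h (t + h) ≤ WL Δ h (t + h) := by
      rcases lt_or_ge (t + h) (6 / 5) with h1 | h1
      · rw [hevL _ h1]
      · rw [hevM _ (not_lt.2 h1) (by nlinarith)]
        exact hWML (t + h) h1 (by linarith)
    calc Wfun Δ h (t - h) + Wfun Δ h (t + h) ≤ WL Δ h (t - h) + WL Δ h (t + h) := by
          rw [hWtm]; linarith
      _ = 2 * Real.cos (26 / 25 * h) * WL Δ h t := hLsum t
      _ ≤ (2 + h ^ 2 * (c - μ)) * WL Δ h t := homega _ hpt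
      _ = (2 + h ^ 2 * (c - μ)) * Wfun Δ h t := by rw [hWt]
  · rcases le_or_gt t (Δ - 6 / 5) with hM | hR
    · -- middle region
      have hWt := hevM t (not_lt.2 hge) hM
      have hpt : 0 < WM Δ t := hWMpos t (by linarith) (by linarith)
      have hcmu : 0 ≤ c - μ := by linarith [hc8 hge hM]
      have kl : Wfun Δ h (t - h) ≤ WM Δ (t - h) := by
        rcases lt_or_ge (t - h) (6 / 5) with h1 | h1
        · rw [hevL _ h1]
          exact hWLM (t - h) (by linarith) (by linarith)
        · rw [hevM _ (not_lt.2 h1) (by linarith)]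
      have kr : Wfun Δ h (t + h) ≤ WM Δ (t + h) := by
        rcases le_or_gt (t + h) (Δ - 6 / 5) with h1 | h1
        · rw [hevM _ (not_lt.2 (by linarith)) h1]
        · rw [hevR _ (not_lt.2 (by linarith)) (not_le.2 h1)]
          exact hWRM (t + h) (by linarith) (by linarith)
      calc Wfun Δ h (t - h) + Wfun Δ h (t + h) ≤ WM Δ (t - h) + WM Δ (t + h) := by linarith
        _ = 2 * Real.cos (θ * h) * WM Δ t := hMsum t
        _ ≤ (2 + h ^ 2 * (c - μ)) * WM Δ t := by
            nlinarith [Real.cos_le_one (θ * h), mul_nonneg (sq_nonneg h) hcmu]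
        _ = (2 + h ^ 2 * (c - μ)) * Wfun Δ h t := by rw [hWt]
    · -- right region
      have hge2 : ¬ t < 6 / 5 := not_lt.2 (by linarith)
      have hWt := hevR t hge2 (not_le.2 hR)
      have hWtp : Wfun Δ h (t + h) = WR Δ h (t + h) :=
        hevR _ (not_lt.2 (by linarith)) (not_le.2 (by linarith))
      have hpt : 0 < WR Δ h t := hWRpos t hR (by linarith)
      have kl : Wfun Δ h (t - h) ≤ WR Δ h (t - h) := by
        rcases le_or_gt (t - h) (Δ - 6 / 5) with h1 | h1
        · rw [hevM _ (not_lt.2 (by linarith)) h1]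
          exact hWMR (t - h) (by linarith) h1
        · rw [hevR _ (not_lt.2 (by linarith)) (not_le.2 h1)]
      calc Wfun Δ h (t - h) + Wfun Δ h (t + h) ≤ WR Δ h (t - h) + WR Δ h (t + h) := by
            rw [hWtp]; linarith
        _ = 2 * Real.cos (26 / 25 * h) * WR Δ h t := hRsum t
        _ ≤ (2 + h ^ 2 * (c - μ)) * WR Δ h t := homega _ hpt
        _ = (2 + h ^ 2 * (c - μ)) * Wfun Δ h t := by rw [hWt]


set_option maxHeartbeats 2000000 in
/-- Positive definiteness of the Jacobian J₀ = diag(T + h²D, T) of the discrete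
Euler–Lagrange map at the origin: every eigenvalue of J₀ is at least (3π/(4Δ))²h². -/
theorem J0_positive_definite
    (am : ℝ → ℝ → ℝ) (ham : IsJacobiAm am)
    (Δ : ℝ) (hΔ : 3 * π ≤ Δ)
    (nt : ℕ) (h : ℝ) (hhdef : h = Δ / (nt + 1)) (hh : h ≤ 0.01)
    (k : ℝ) (hk : k ∈ Set.Ioo (0:ℝ) 1) (hkΔ : 2 * k * ellK k = Δ)
    (D : Matrix (Fin nt) (Fin nt) ℝ)
    (hD : D = Matrix.diagonal (fun r : Fin nt =>
      Real.cos (π + 2 * am (k⁻¹ * (((r : ℕ) : ℝ) + 1) * h) k)))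
    (J₀ : Matrix (Fin nt ⊕ Fin nt) (Fin nt ⊕ Fin nt) ℝ)
    (hJ : J₀ = Matrix.fromBlocks (tridT nt + h ^ 2 • D) 0 0 (tridT nt)) :
    (∀ lam ∈ spectrum ℝ J₀, (3 * π / (4 * Δ)) ^ 2 * h ^ 2 ≤ lam) ∧ J₀.PosDef := by
  classical
  have hπ := Real.pi_pos
  have hπl : (3.14 : ℝ) < π := Real.pi_gt_d2
  have hΔ0 : 0 < Δ := by nlinarith
  have hΔ94 : (9.42:ℝ) ≤ Δ := by nlinarith
  have hnt1 : (0:ℝ) < (nt:ℝ) + 1 := by positivity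
  have hh0 : 0 < h := by rw [hhdef]; positivity
  have hhΔ : ((nt:ℝ) + 1) * h = Δ := by rw [hhdef]; field_simp
  have hh1 : h ≤ 1 / 100 := by norm_num at hh; linarith
  set μ : ℝ := (3 * π / (4 * Δ)) ^ 2 * h ^ 2 with hμdef
  have hμpos : 0 < μ := by rw [hμdef]; positivity
  set cf : Fin nt → ℝ :=
    fun i => Real.cos (π + 2 * am (k⁻¹ * (((i : ℕ) : ℝ) + 1) * h) k) with hcfdef
  -- block A as triMat
  have hA : tridT nt + h ^ 2 • D = triMat nt (fun i => 2 + h ^ 2 * cf i) := by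
    rw [hD]
    ext i j
    simp only [Matrix.add_apply, Matrix.smul_apply, tridT, triMat, Matrix.of_apply,
      Matrix.diagonal_apply, smul_eq_mul, hcfdef]
    by_cases hij : i = j
    · simp [hij]
    · have hji : ¬ j = i := fun hc => hij hc.symm
      simp [hij, hji]
  have hB : tridT nt = triMat nt (fun _ => (2:ℝ)) := by
    ext i j
    simp only [tridT, triMat, Matrix.of_apply]
  -- form bound for block A
  have hWmain := Wfun_main Δ h hΔ hh0 hh1
  have hgrid : ∀ m : ℕ, m ≤ nt + 1 → (m : ℝ) * h ≤ Δ := by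
    intro m hm
    have : (m:ℝ) ≤ (nt:ℝ) + 1 := by exact_mod_cast hm
    nlinarith
  have hformA : ∀ x : Fin nt → ℝ,
      μ * (∑ j, x j ^ 2) ≤ x ⬝ᵥ ((tridT nt + h ^ 2 • D) *ᵥ x) := by
    intro x
    rw [hA]
    apply quad_form_lower nt _ μ (fun m => Wfun Δ h ((m : ℝ) * h)) ?_ ?_ x
    · intro m hm
      exact hWmain.1 _ (by positivity) (hgrid m hm)
    · intro i
      have hile' : (i : ℕ) + 1 ≤ nt := i.isLt
      have hile : ((i : ℕ) : ℝ) + 1 ≤ (nt : ℝ) := by exact_mod_cast hile'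
      set t : ℝ := (((i : ℕ) : ℝ) + 1) * h with htdef
      have h0i : (0:ℝ) ≤ ((i : ℕ) : ℝ) := by positivity
      have ht1 : h ≤ t := by nlinarith
      have ht2 : t ≤ Δ - h := by nlinarith
      have hc1 : -1 ≤ cf i := Real.neg_one_le_cos _
      have hc8 : 6 / 5 ≤ t → t ≤ Δ - 6 / 5 → 1 / 8 ≤ cf i := by
        intro ha hb
        rw [hcfdef]
        simp only []
        have e : k⁻¹ * (((i : ℕ) : ℝ) + 1) * h = k⁻¹ * t := by rw [htdef]; ring
        rw [e]
        exact am_cos_bound am ham k hk Δ hΔ hkΔ t ha hb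
      have hcond := hWmain.2 t (cf i) ht1 ht2 hc1 hc8
      have e1 : ((i : ℕ) : ℝ) * h = t - h := by rw [htdef]; ring
      have e2 : (((i : ℕ) + 2 : ℕ) : ℝ) * h = t + h := by push_cast; rw [htdef]; ring
      have e3 : (((i : ℕ) + 1 : ℕ) : ℝ) * h = t := by push_cast; rw [htdef]
      simp only [e1, e2, e3]

      calc Wfun Δ h (t - h) + Wfun Δ h (t + h)
          ≤ (2 + h ^ 2 * (cf i - (3 * π / (4 * Δ)) ^ 2)) * Wfun Δ h t := hcond
        _ = (2 + h ^ 2 * cf i - μ) * Wfun Δ h t := by rw [hμdef]; ring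
  -- form bound for block B
  have hformB : ∀ x : Fin nt → ℝ, μ * (∑ j, x j ^ 2) ≤ x ⬝ᵥ (tridT nt *ᵥ x) := by
    intro x
    rw [hB]
    set ψ : ℝ := π / (Δ + 2 * h) with hψdef
    have hψpos : 0 < ψ := by rw [hψdef]; positivity
    have hψh : ψ * h ≤ h / 2 := by
      rw [hψdef]
      rw [div_mul_eq_mul_div, div_le_iff₀ (by linarith)]
      nlinarith
    have hWTpos : ∀ m : ℕ, m ≤ nt + 1 → 0 < Real.sin (ψ * ((m : ℝ) * h + h)) := by
      intro m hm
      apply Real.sin_pos_of_pos_of_lt_pi (by positivity)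
      have h1 : (m : ℝ) * h + h < Δ + 2 * h := by
        have := hgrid m hm
        linarith
      calc ψ * ((m : ℝ) * h + h) < ψ * (Δ + 2 * h) := by
            apply mul_lt_mul_of_pos_left h1 hψpos
        _ = π := by rw [hψdef]; field_simp
    apply quad_form_lower nt _ μ (fun m => Real.sin (ψ * ((m : ℝ) * h + h))) ?_ ?_ x
    · exact hWTpos
    · intro i
      have hile' : (i : ℕ) + 1 ≤ nt := i.isLt
      have hile : ((i : ℕ) : ℝ) + 1 ≤ (nt : ℝ) := by exact_mod_cast hile'
      set a : ℝ := ψ * ((((i : ℕ) : ℝ) + 1) * h + h) with hadef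
      have e1 : ψ * (((i : ℕ) : ℝ) * h + h) = a - ψ * h := by rw [hadef]; ring
      have e2 : ψ * ((((i : ℕ) + 2 : ℕ) : ℝ) * h + h) = a + ψ * h := by
        push_cast; rw [hadef]; ring
      have e3 : ((((i : ℕ) + 1 : ℕ) : ℝ)) = (((i : ℕ) : ℝ) + 1) := by push_cast; ring
      have hsina : 0 < Real.sin a := by
        have hw := hWTpos ((i : ℕ) + 1) (by omega)
        have ecast : (((i : ℕ) + 1 : ℕ) : ℝ) = ((i : ℕ) : ℝ) + 1 := by push_cast; ring
        rw [ecast] at hw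
        rw [hadef]
        exact hw
      have hcoef : 2 - 2 * Real.cos (ψ * h) ≥ μ := by
        have hz := two_sub_two_cos_ge' (z := ψ * h) (by positivity) (by nlinarith)
        -- μ = (3π/(4Δ))² h² ≤ (ψ h)² (1 - (ψh)²/2)
        have hza : 16 * (3 * π / (4 * Δ) * h) ≤ 15 * (ψ * h) := by
          have e : 15 * (ψ * h) - 16 * (3 * π / (4 * Δ) * h)
              = (π * h * (12 * Δ - 96 * h)) / ((Δ + 2 * h) * (4 * Δ)) := by
            rw [hψdef]
            field_simp
            ring
          have hnn : 0 ≤ (π * h * (12 * Δ - 96 * h)) / ((Δ + 2 * h) * (4 * Δ)) := by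
            apply div_nonneg
            · apply mul_nonneg (mul_nonneg hπ.le hh0.le)
              nlinarith
            · nlinarith
          linarith [e, hnn]
        have hst : 0 ≤ 3 * π / (4 * Δ) * h := by positivity
        have hzh : ψ * h ≤ 1 / 200 := by linarith
        have hμz : μ ≤ (225 / 256) * (ψ * h) ^ 2 := by
          rw [hμdef]
          have e4 : (3 * π / (4 * Δ)) ^ 2 * h ^ 2 = (3 * π / (4 * Δ) * h) ^ 2 := by ring
          rw [e4]
          nlinarith [hza, hst]
        have hzsq : (ψ * h) ^ 2 ≤ 1 / 40000 := by nlinarith [mul_pos hψpos hh0]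
        nlinarith [hz, hμz, hzsq, sq_nonneg (ψ * h)]
      rw [e1, e2, e3, Real.sin_sub, Real.sin_add]
      have lhs_eq : Real.sin a * Real.cos (ψ * h) - Real.cos a * Real.sin (ψ * h)
          + (Real.sin a * Real.cos (ψ * h) + Real.cos a * Real.sin (ψ * h))
          = 2 * Real.cos (ψ * h) * Real.sin a := by ring
      rw [lhs_eq]
      nlinarith [hsina, hcoef]
  -- full quadratic form bound
  have hform : ∀ x : Fin nt ⊕ Fin nt → ℝ, μ * (∑ j, x j ^ 2) ≤ x ⬝ᵥ (J₀ *ᵥ x) := by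
    intro x
    rw [hJ, Matrix.fromBlocks_mulVec]
    simp only [Matrix.zero_mulVec, add_zero, zero_add]
    have hsplit : x ⬝ᵥ (Sum.elim ((tridT nt + h ^ 2 • D) *ᵥ (x ∘ Sum.inl))
        ((tridT nt) *ᵥ (x ∘ Sum.inr)))
        = (x ∘ Sum.inl) ⬝ᵥ ((tridT nt + h ^ 2 • D) *ᵥ (x ∘ Sum.inl))
          + (x ∘ Sum.inr) ⬝ᵥ ((tridT nt) *ᵥ (x ∘ Sum.inr)) := by
      rw [dotProduct, Fintype.sum_sum_type]
      simp only [Sum.elim_inl, Sum.elim_inr, dotProduct, Function.comp_apply]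
    rw [hsplit]
    have hsq : (∑ j, x j ^ 2)
        = (∑ a, (x ∘ Sum.inl) a ^ 2) + ∑ b, (x ∘ Sum.inr) b ^ 2 := by
      rw [Fintype.sum_sum_type]
      simp only [Function.comp_apply]
    rw [hsq]
    have h1 := hformA (x ∘ Sum.inl)
    have h2 := hformB (x ∘ Sum.inr)
    linarith
  -- eigenvalue bound
  have hspec : ∀ lam ∈ spectrum ℝ J₀, μ ≤ lam := by
    intro lam hl
    rw [spectrum.mem_iff] at hl
    have hdet : ((algebraMap ℝ (Matrix (Fin nt ⊕ Fin nt) (Fin nt ⊕ Fin nt) ℝ)) lam - J₀).det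
        = 0 := by
      by_contra hd
      exact hl ((Matrix.isUnit_iff_isUnit_det _).2 (isUnit_iff_ne_zero.2 hd))
    obtain ⟨v, hv0, hv⟩ := Matrix.exists_mulVec_eq_zero_iff.2 hdet
    have halg : (algebraMap ℝ (Matrix (Fin nt ⊕ Fin nt) (Fin nt ⊕ Fin nt) ℝ)) lam
        = lam • (1 : Matrix (Fin nt ⊕ Fin nt) (Fin nt ⊕ Fin nt) ℝ) :=
      Algebra.algebraMap_eq_smul_one lam
    have hMv : J₀ *ᵥ v = lam • v := by
      have e : (algebraMap ℝ (Matrix (Fin nt ⊕ Fin nt) (Fin nt ⊕ Fin nt) ℝ) lam - J₀) *ᵥ v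
          = lam • v - J₀ *ᵥ v := by
        rw [Matrix.sub_mulVec, halg, Matrix.smul_mulVec, Matrix.one_mulVec]
      rw [e] at hv
      have := sub_eq_zero.1 hv
      exact this.symm
    obtain ⟨j, hj⟩ := Function.ne_iff.1 hv0
    have hden : 0 < ∑ j, v j ^ 2 := by
      apply Finset.sum_pos' (fun i _ => sq_nonneg _)
      refine ⟨j, Finset.mem_univ j, ?_⟩
      exact lt_of_le_of_ne (sq_nonneg _) (Ne.symm (pow_ne_zero 2 (by simpa using hj)))
    have hfv := hform v
    rw [hMv, dotProduct_smul] at hfv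
    have e2 : v ⬝ᵥ v = ∑ j, v j ^ 2 := by
      simp [dotProduct, sq]
    rw [e2] at hfv
    have hfv' : μ * (∑ j, v j ^ 2) ≤ lam * (∑ j, v j ^ 2) := by
      simpa [smul_eq_mul] using hfv
    exact le_of_mul_le_mul_right (by linarith) hden
  constructor
  · intro lam hl
    have := hspec lam hl
    rw [hμdef] at this
    exact this
  · rw [Matrix.posDef_iff_dotProduct_mulVec]
    constructor
    · -- IsHermitian
      rw [hJ]
      have hAH : (tridT nt + h ^ 2 • D).IsHermitian := by
        rw [hD]
        ext i j
        simp only [Matrix.conjTranspose_apply, Matrix.add_apply, Matrix.smul_apply, tridT,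
          Matrix.of_apply, Matrix.diagonal_apply, smul_eq_mul, star_trivial]
        by_cases hij : i = j
        · simp [hij]
        · have hji : ¬ j = i := fun hc => hij hc.symm
          have hor : ((j : ℕ) + 1 = (i : ℕ) ∨ (i : ℕ) + 1 = (j : ℕ))
              ↔ ((i : ℕ) + 1 = (j : ℕ) ∨ (j : ℕ) + 1 = (i : ℕ)) := or_comm
          simp [hij, hji, hor]
      have hBH : (tridT nt).IsHermitian := by
        ext i j
        simp only [Matrix.conjTranspose_apply, tridT, Matrix.of_apply, star_trivial]
        by_cases hij : i = j
        · simp [hij]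
        · have hji : ¬ j = i := fun hc => hij hc.symm
          have hor : ((j : ℕ) + 1 = (i : ℕ) ∨ (i : ℕ) + 1 = (j : ℕ))
              ↔ ((i : ℕ) + 1 = (j : ℕ) ∨ (j : ℕ) + 1 = (i : ℕ)) := or_comm
          simp [hij, hji, hor]
      have : (Matrix.fromBlocks (tridT nt + h ^ 2 • D) 0 0 (tridT nt)).IsHermitian := by
        unfold Matrix.IsHermitian
        rw [Matrix.fromBlocks_conjTranspose]
        rw [hAH, hBH]
        simp
      exact this
    · intro x hx
      have h1 := hform x
      have h2 : 0 < ∑ j, x j ^ 2 := by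
        obtain ⟨j, hj⟩ := Function.ne_iff.1 hx
        apply Finset.sum_pos' (fun i _ => sq_nonneg _)
        refine ⟨j, Finset.mem_univ j, ?_⟩
        exact lt_of_le_of_ne (sq_nonneg _) (Ne.symm (pow_ne_zero 2 (by simpa using hj)))
      have h3 : 0 < x ⬝ᵥ (J₀ *ᵥ x) := lt_of_lt_of_le (by positivity) h1
      simpa using h3
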